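/- For every real p ≥ 2 and every τ ∈ (0,1), (((1+τ)^p + (1−τ)^p)/2)^{1/p} ≤ 1 + 2^p·τ². -/

import Mathlib

open Real Set

/-- `2 p ≤ 2 ^ p` for `p ≥ 2`. -/
lemma aux_two_mul_le_rpow {p : ℝ} (hp : 2 ≤ p) : 2 * p ≤ (2:ℝ) ^ p := by
  have h1 : (2:ℝ) ^ p = 4 * (2:ℝ) ^ (p - 2) := by
    rw [show (4:ℝ) = (2:ℝ)^(2:ℝ) by norm_num [Real.rpow_two],
      ← Real.rpow_add (by norm_num)]
    ring_nf
  have h2 : (2:ℝ) ^ (p - 2) = Real.exp ((p - 2) * Real.log 2) := by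
    rw [Real.rpow_def_of_pos (by norm_num)]; ring_nf
  have h3 : 1 + (p - 2) * Real.log 2 ≤ Real.exp ((p - 2) * Real.log 2) :=
    Real.add_one_le_exp _ |>.trans_eq' (by ring)
  have hlog : (0.6931471803 : ℝ) < Real.log 2 := Real.log_two_gt_d9
  nlinarith [h3, hlog, h1, h2]

/-- On `[0, 2^(-p)]` the base bound `(1+t)^(p-2) ≤ 3`. -/
lemma aux_base_bound {p t : ℝ} (hp : 2 ≤ p) (ht0 : 0 ≤ t) (ht : t ≤ (2:ℝ) ^ (-p)) :
    (1 + t) ^ (p - 2) ≤ 3 := by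
  have hτ0 : (0:ℝ) < (2:ℝ) ^ (-p) := Real.rpow_pos_of_pos (by norm_num) _
  have h1t : (1:ℝ) ≤ 1 + t := by linarith
  have hpτ : p * (2:ℝ) ^ (-p) ≤ 1 / 2 := by
    have h2 : (2:ℝ) ^ (-p) = ((2:ℝ) ^ p)⁻¹ := Real.rpow_neg (by norm_num) p
    have h3 := aux_two_mul_le_rpow hp
    have h4 : (0:ℝ) < (2:ℝ) ^ p := Real.rpow_pos_of_pos (by norm_num) _
    rw [h2]
    calc p * ((2:ℝ) ^ p)⁻¹ ≤ ((2:ℝ)^p / 2) * ((2:ℝ)^p)⁻¹ :=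
          mul_le_mul_of_nonneg_right (by linarith) (by positivity)
      _ = 1 / 2 := by field_simp
  calc (1 + t) ^ (p - 2) ≤ (1 + t) ^ p :=
        Real.rpow_le_rpow_of_exponent_le h1t (by linarith)
    _ ≤ (1 + (2:ℝ) ^ (-p)) ^ p := by
        apply Real.rpow_le_rpow (by linarith) (by linarith) (by linarith)
    _ = Real.exp (p * Real.log (1 + (2:ℝ) ^ (-p))) := by
        rw [Real.rpow_def_of_pos (by linarith)]; ring_nf
    _ ≤ Real.exp (p * (2:ℝ) ^ (-p)) := by
        apply Real.exp_le_exp.2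
        apply mul_le_mul_of_nonneg_left _ (by linarith)
        have := Real.log_le_sub_one_of_pos (show (0:ℝ) < 1 + (2:ℝ)^(-p) by linarith)
        linarith
    _ ≤ Real.exp (1/2) := Real.exp_le_exp.2 hpτ
    _ ≤ Real.exp 1 := Real.exp_le_exp.2 (by norm_num)
    _ ≤ 3 := by
        have := Real.exp_one_lt_d9
        linarith

/-- First monotonicity layer. -/
lemma aux_layer1 {p τ : ℝ} (hp : 2 ≤ p) (hτ0 : 0 ≤ τ) (hτ : τ ≤ (2:ℝ) ^ (-p)) :
    (1 + τ) ^ (p - 1) - (1 - τ) ^ (p - 1) ≤ 6 * (p - 1) * τ := by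
  have hτ04 : (2:ℝ) ^ (-p) ≤ 1/4 := by
    calc (2:ℝ) ^ (-p) ≤ (2:ℝ) ^ (-2 : ℝ) :=
          Real.rpow_le_rpow_of_exponent_le (by norm_num) (by linarith)
      _ = 1/4 := by
          rw [Real.rpow_neg (by norm_num)]; norm_num [Real.rpow_two]
  set ψ : ℝ → ℝ := fun t => 6 * (p - 1) * t - (1 + t) ^ (p - 1) + (1 - t) ^ (p - 1) with hψ
  have hd : ∀ t ∈ Icc (0:ℝ) ((2:ℝ)^(-p)), HasDerivAt ψ
      (6 * (p - 1) - 1 * (p - 1) * (1 + t) ^ (p - 1 - 1)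
        + (-1) * (p - 1) * (1 - t) ^ (p - 1 - 1)) t := by
    intro t ht
    have h1 : (1:ℝ) + t ≠ 0 := by have := ht.1; positivity
    have h2 : (1:ℝ) - t ≠ 0 := by
      have := ht.2; have : t ≤ 1/4 := le_trans this hτ04; intro h; linarith
    have d1 : HasDerivAt (fun t : ℝ => (1 + t) ^ (p - 1)) (1 * (p-1) * (1+t)^(p-1-1)) t :=
      HasDerivAt.rpow_const ((hasDerivAt_id t).const_add 1) (Or.inl h1)
    have d2 : HasDerivAt (fun t : ℝ => (1 - t) ^ (p - 1)) ((-1) * (p-1) * (1-t)^(p-1-1)) t :=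
      HasDerivAt.rpow_const ((hasDerivAt_id t).const_sub 1) (Or.inl h2)
    have d0 : HasDerivAt (fun t : ℝ => 6 * (p - 1) * t) (6 * (p - 1)) t := by
      simpa using (hasDerivAt_id t).const_mul (6 * (p - 1))
    exact (d0.sub d1).add d2
  have hmono : MonotoneOn ψ (Icc (0:ℝ) ((2:ℝ)^(-p))) := by
    apply monotoneOn_of_deriv_nonneg (convex_Icc _ _)
    · exact fun t ht => (hd t ht).continuousAt.continuousWithinAt
    · rw [interior_Icc]
      exact fun t ht => (hd t (Ioo_subset_Icc_self ht)).differentiableAt.differentiableWithinAt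
    · rw [interior_Icc]
      intro t ht
      rw [(hd t (Ioo_subset_Icc_self ht)).deriv]
      have ht1 : (1 + t) ^ (p - 1 - 1) ≤ 3 := by
        have : p - 1 - 1 = p - 2 := by ring
        rw [this]
        exact aux_base_bound hp ht.1.le (le_of_lt ht.2)
      have htt : t ≤ 1/4 := ht.2.le.trans hτ04
      have ht2 : (1 - t) ^ (p - 1 - 1) ≤ 1 :=
        Real.rpow_le_one (by linarith) (by linarith [ht.1.le]) (by linarith)
      nlinarith [ht1, ht2, hp]
  have h0 : ψ 0 = 0 := by simp [hψ]
  have := hmono (left_mem_Icc.2 (by positivity)) (mem_Icc.2 ⟨hτ0, hτ⟩) hτ0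
  rw [h0] at this
  simp only [hψ] at this
  linarith

/-- Second monotonicity layer: key quadratic bound for small `τ`. -/
lemma aux_key {p τ : ℝ} (hp : 2 ≤ p) (hτ0 : 0 ≤ τ) (hτ : τ ≤ (2:ℝ) ^ (-p)) :
    (1 + τ) ^ p + (1 - τ) ^ p ≤ 2 + 3 * p * (p - 1) * τ ^ 2 := by
  have hτ04 : (2:ℝ) ^ (-p) ≤ 1/4 := by
    calc (2:ℝ) ^ (-p) ≤ (2:ℝ) ^ (-2 : ℝ) :=
          Real.rpow_le_rpow_of_exponent_le (by norm_num) (by linarith)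
      _ = 1/4 := by
          rw [Real.rpow_neg (by norm_num)]; norm_num [Real.rpow_two]
  set φ : ℝ → ℝ := fun t => 2 + 3 * p * (p - 1) * t ^ 2 - (1 + t) ^ p - (1 - t) ^ p with hφ
  have hd : ∀ t ∈ Icc (0:ℝ) ((2:ℝ)^(-p)), HasDerivAt φ
      (3 * p * (p - 1) * (2 * t) - 1 * p * (1 + t) ^ (p - 1)
        - (-1) * p * (1 - t) ^ (p - 1)) t := by
    intro t ht
    have h1 : (1:ℝ) + t ≠ 0 := by have := ht.1; positivity
    have h2 : (1:ℝ) - t ≠ 0 := by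
      have := ht.2; have : t ≤ 1/4 := le_trans this hτ04; intro h; linarith
    have d1 : HasDerivAt (fun t : ℝ => (1 + t) ^ p) (1 * p * (1+t)^(p-1)) t :=
      HasDerivAt.rpow_const ((hasDerivAt_id t).const_add 1) (Or.inl h1)
    have d2 : HasDerivAt (fun t : ℝ => (1 - t) ^ p) ((-1) * p * (1-t)^(p-1)) t :=
      HasDerivAt.rpow_const ((hasDerivAt_id t).const_sub 1) (Or.inl h2)
    have d0 : HasDerivAt (fun t : ℝ => 2 + 3 * p * (p - 1) * t ^ 2)
        (3 * p * (p - 1) * (2 * t)) t := by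
      have : HasDerivAt (fun t : ℝ => t ^ 2) (2 * t) t := by
        simpa using hasDerivAt_pow 2 t
      simpa using (this.const_mul (3 * p * (p - 1))).const_add 2
    exact (d0.sub d1).sub d2
  have hmono : MonotoneOn φ (Icc (0:ℝ) ((2:ℝ)^(-p))) := by
    apply monotoneOn_of_deriv_nonneg (convex_Icc _ _)
    · exact fun t ht => (hd t ht).continuousAt.continuousWithinAt
    · rw [interior_Icc]
      exact fun t ht => (hd t (Ioo_subset_Icc_self ht)).differentiableAt.differentiableWithinAt
    · rw [interior_Icc]
      intro t ht
      rw [(hd t (Ioo_subset_Icc_self ht)).deriv]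
      have h1 := aux_layer1 hp ht.1.le ht.2.le
      nlinarith [h1, hp, ht.1]
  have h0 : φ 0 = 0 := by norm_num [hφ, Real.one_rpow]
  have := hmono (left_mem_Icc.2 (by positivity)) (mem_Icc.2 ⟨hτ0, hτ⟩) hτ0
  rw [h0] at this
  simp only [hφ] at this
  linarith

/-- For every real `p ≥ 2` and `τ ∈ (0,1)`,
`(((1+τ)^p + (1-τ)^p)/2)^{1/p} ≤ 1 + 2^p τ²`. -/
theorem stmt_18 (p τ : ℝ) (hp : 2 ≤ p) (hτ0 : 0 < τ) (hτ1 : τ < 1) :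
    (((1 + τ) ^ p + (1 - τ) ^ p) / 2) ^ (1 / p) ≤ 1 + 2 ^ p * τ ^ 2 := by
  have hp0 : (0:ℝ) < p := by linarith
  have h2p : (0:ℝ) < (2:ℝ) ^ p := Real.rpow_pos_of_pos (by norm_num) _
  have hA0 : (0:ℝ) ≤ ((1 + τ) ^ p + (1 - τ) ^ p) / 2 := by
    have := Real.rpow_nonneg (show (0:ℝ) ≤ 1 + τ by linarith) p
    have := Real.rpow_nonneg (show (0:ℝ) ≤ 1 - τ by linarith) p
    linarith
  rcases le_or_gt τ ((2:ℝ) ^ (-p)) with hcase | hcase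
  · -- small τ : use the quadratic bound and Bernoulli
    have hkey := aux_key hp hτ0.le hcase
    have hx0 : (0:ℝ) ≤ 3/2 * p * (p - 1) * τ ^ 2 := by
      have h := mul_nonneg (mul_nonneg (show (0:ℝ) ≤ 3/2 * p by linarith)
        (show (0:ℝ) ≤ p - 1 by linarith)) (sq_nonneg τ)
      nlinarith [h]
    have step1 : (((1 + τ) ^ p + (1 - τ) ^ p) / 2) ^ (1 / p)
        ≤ (1 + 3/2 * p * (p - 1) * τ ^ 2) ^ (1 / p) := by
      apply Real.rpow_le_rpow hA0 (by linarith) (by positivity)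
    have step2 : (1 + 3/2 * p * (p - 1) * τ ^ 2) ^ (1 / p)
        ≤ 1 + (1 / p) * (3/2 * p * (p - 1) * τ ^ 2) :=
      rpow_one_add_le_one_add_mul_self (by linarith) (by positivity)
        (by rw [div_le_one hp0]; linarith)
    have heq : 1 + (1 / p) * (3/2 * p * (p - 1) * τ ^ 2) = 1 + 3/2 * (p - 1) * τ ^ 2 := by
      field_simp
    have hfin : 3/2 * (p - 1) ≤ (2:ℝ) ^ p := by
      have := aux_two_mul_le_rpow hp
      linarith
    have : 3/2 * (p - 1) * τ ^ 2 ≤ (2:ℝ) ^ p * τ ^ 2 := by nlinarith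
    calc (((1 + τ) ^ p + (1 - τ) ^ p) / 2) ^ (1 / p)
        ≤ 1 + (1 / p) * (3/2 * p * (p - 1) * τ ^ 2) := step1.trans step2
      _ = 1 + 3/2 * (p - 1) * τ ^ 2 := heq
      _ ≤ 1 + 2 ^ p * τ ^ 2 := by linarith
  · -- large τ : the trivial bound `1 + τ`
    have h1 : (1 - τ) ^ p ≤ (1 + τ) ^ p :=
      Real.rpow_le_rpow (by linarith) (by linarith) hp0.le
    have h2 : (((1 + τ) ^ p + (1 - τ) ^ p) / 2) ^ (1 / p) ≤ ((1 + τ) ^ p) ^ (1 / p) :=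
      Real.rpow_le_rpow hA0 (by linarith) (by positivity)
    have h3 : ((1 + τ) ^ p) ^ (1 / p) = 1 + τ := by
      rw [← Real.rpow_mul (show (0:ℝ) ≤ 1 + τ by linarith), mul_one_div_cancel hp0.ne',
        Real.rpow_one]
    have h4 : 1 + τ ≤ 1 + 2 ^ p * τ ^ 2 := by
      have hτinv : (2:ℝ) ^ (-p) = ((2:ℝ) ^ p)⁻¹ := Real.rpow_neg (by norm_num) p
      have : (1:ℝ) ≤ (2:ℝ) ^ p * τ := by
        rw [hτinv] at hcase
        calc (1:ℝ) = (2:ℝ)^p * ((2:ℝ)^p)⁻¹ := by field_simp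
          _ ≤ (2:ℝ)^p * τ := mul_le_mul_of_nonneg_left hcase.le h2p.le
      nlinarith
    calc (((1 + τ) ^ p + (1 - τ) ^ p) / 2) ^ (1 / p) ≤ 1 + τ := h2.trans_eq h3
      _ ≤ 1 + 2 ^ p * τ ^ 2 := h4
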